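/- Let P and P̂ be n×r real basis matrices, let Q be an n×c real basis matrix with Qᵀ P = 0, and set ζ* := ‖(I − P̂ P̂ᵀ) P‖₂. Then ‖P̂ᵀ Q‖₂ ≤ ζ*, and every singular value of the matrix (I − P̂ P̂ᵀ) Q lies in the interval [√(1 − ζ*²), 1]. -/

import Mathlib

open Matrix
open scoped RealInnerProductSpace

noncomputable def ev {k : Type*} [Fintype k] (v : k → ℝ) : EuclideanSpace ℝ k :=
  (WithLp.equiv 2 _).symm v

lemma dot_eq_inner {k : Type*} [Fintype k] (v w : k → ℝ) :
    v ⬝ᵥ w = ⟪ev v, ev w⟫ := by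
  simp [ev, PiLp.inner_apply, dotProduct, mul_comm]

lemma norm_ev_sq {k : Type*} [Fintype k] (v : k → ℝ) : ‖ev v‖ ^ 2 = v ⬝ᵥ v := by
  rw [dot_eq_inner, real_inner_self_eq_norm_sq]

lemma dot_mulVec_left {m k : Type*} [Fintype m] [Fintype k]
    (A : Matrix m k ℝ) (x : k → ℝ) (y : m → ℝ) :
    (A.mulVec x) ⬝ᵥ y = x ⬝ᵥ (Aᵀ.mulVec y) := by
  rw [Matrix.mulVec_transpose, dotProduct_comm, Matrix.dotProduct_mulVec,
    dotProduct_comm]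

/-- Spectral norm (largest singular value) of a real matrix. -/
noncomputable def specNorm {m n : Type*} [Fintype m] [Fintype n] [DecidableEq n]
    (A : Matrix m n ℝ) : ℝ :=
  ‖LinearMap.toContinuousLinearMap (Matrix.toEuclideanLin A)‖

lemma specNorm_nonneg {m n : Type*} [Fintype m] [Fintype n] [DecidableEq n]
    (A : Matrix m n ℝ) : 0 ≤ specNorm A := norm_nonneg _

lemma specNorm_mulVec_le {m n : Type*} [Fintype m] [Fintype n] [DecidableEq n]
    (A : Matrix m n ℝ) (x : n → ℝ) :
    ‖ev (A.mulVec x)‖ ≤ specNorm A * ‖ev x‖ := by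
  have h := (LinearMap.toContinuousLinearMap (Matrix.toEuclideanLin A)).le_opNorm (ev x)
  simpa [specNorm, ev, Matrix.toEuclideanLin_apply_piLp_toLp] using h

lemma specNorm_le_bound {m n : Type*} [Fintype m] [Fintype n] [DecidableEq n]
    (A : Matrix m n ℝ) (c : ℝ) (hc : 0 ≤ c)
    (h : ∀ x : n → ℝ, ‖ev (A.mulVec x)‖ ≤ c * ‖ev x‖) : specNorm A ≤ c := by
  refine ContinuousLinearMap.opNorm_le_bound _ hc fun x => ?_
  have := h (WithLp.equiv 2 _ x)
  simpa [ev, Matrix.toEuclideanLin_apply_piLp_toLp, Matrix.toEuclideanLin_apply] using this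

lemma norm_mulVec_eq {m k : Type*} [Fintype m] [Fintype k] [DecidableEq k]
    (A : Matrix m k ℝ) (hA : Aᵀ * A = 1) (x : k → ℝ) :
    ‖ev (A.mulVec x)‖ = ‖ev x‖ := by
  have h : ‖ev (A.mulVec x)‖ ^ 2 = ‖ev x‖ ^ 2 := by
    rw [norm_ev_sq, norm_ev_sq, dot_mulVec_left, Matrix.mulVec_mulVec, hA, Matrix.one_mulVec]
  have h1 := norm_nonneg (ev (A.mulVec x))
  have h2 := norm_nonneg (ev x)
  nlinarith

lemma ev_smul {k : Type*} [Fintype k] (c : ℝ) (v : k → ℝ) : ev (c • v) = c • ev v := rfl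

lemma ev_zero {k : Type*} [Fintype k] : ev (0 : k → ℝ) = 0 := rfl

lemma ev_ne_zero {k : Type*} [Fintype k] {v : k → ℝ} (hv : v ≠ 0) : ev v ≠ 0 := by
  intro h
  exact hv ((WithLp.equiv 2 (k → ℝ)).symm.injective (h.trans ev_zero.symm))

lemma norm_ev_normalize {k : Type*} [Fintype k] {z : k → ℝ} (hz : z ≠ 0) :
    ‖ev (‖ev z‖⁻¹ • z)‖ = 1 := by
  have hpos : (0:ℝ) < ‖ev z‖ := norm_pos_iff.mpr (ev_ne_zero hz)
  rw [ev_smul, norm_smul, Real.norm_eq_abs, abs_of_pos (inv_pos.mpr hpos),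
    inv_mul_cancel₀ hpos.ne']

lemma lemA {r : ℕ} (S : Matrix (Fin r) (Fin r) ℝ) (τ : ℝ) (w : Fin r → ℝ)
    (hw : ‖ev w‖ = 1) (hSw : ‖ev (Sᵀ.mulVec w)‖ ≤ τ) :
    ∃ u : Fin r → ℝ, ‖ev u‖ = 1 ∧ ‖ev (S.mulVec u)‖ ≤ τ := by
  have hτ : 0 ≤ τ := le_trans (norm_nonneg _) hSw
  by_cases hinj : Function.Injective (Matrix.toLin' S)
  · have hsurj : Function.Surjective (Matrix.toLin' S) :=
      LinearMap.injective_iff_surjective.mp hinj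
    obtain ⟨z, hz⟩ := hsurj w
    rw [Matrix.toLin'_apply] at hz
    have hwne : w ≠ 0 := by
      intro h; rw [h] at hw; simp [ev_zero] at hw
    have hzne : z ≠ 0 := by
      rintro rfl; rw [Matrix.mulVec_zero] at hz; exact hwne hz.symm
    have hpos : (0:ℝ) < ‖ev z‖ := norm_pos_iff.mpr (ev_ne_zero hzne)
    refine ⟨‖ev z‖⁻¹ • z, norm_ev_normalize hzne, ?_⟩
    rw [Matrix.mulVec_smul, hz, ev_smul, norm_smul, Real.norm_eq_abs,
      abs_of_pos (inv_pos.mpr hpos), hw, mul_one, inv_eq_one_div, div_le_iff₀ hpos]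
    have h1 : w ⬝ᵥ w = 1 := by
      have := norm_ev_sq w; rw [hw] at this; linarith [this]
    have h2 : w ⬝ᵥ w = z ⬝ᵥ (Sᵀ.mulVec w) := by
      rw [← hz, dot_mulVec_left]
    have h3 : z ⬝ᵥ (Sᵀ.mulVec w) ≤ ‖ev z‖ * ‖ev (Sᵀ.mulVec w)‖ := by
      rw [dot_eq_inner]; exact real_inner_le_norm _ _
    nlinarith [norm_nonneg (ev (Sᵀ.mulVec w))]
  · have hker : LinearMap.ker (Matrix.toLin' S) ≠ ⊥ := by
      rwa [Ne, LinearMap.ker_eq_bot]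
    obtain ⟨z, hzmem, hzne⟩ := Submodule.exists_mem_ne_zero_of_ne_bot hker
    have hz0 : S.mulVec z = 0 := by
      rw [← Matrix.toLin'_apply]; exact LinearMap.mem_ker.mp hzmem
    refine ⟨‖ev z‖⁻¹ • z, norm_ev_normalize hzne, ?_⟩
    rw [Matrix.mulVec_smul, hz0, smul_zero, ev_zero, norm_zero]
    exact hτ

set_option maxHeartbeats 3000000 in
lemma key {n r : ℕ} (P Phat : Matrix (Fin n) (Fin r) ℝ)
    (hP : Pᵀ * P = 1) (hPhat : Phatᵀ * Phat = 1)
    (y : Fin n → ℝ) (hy : ‖ev y‖ = 1) (hyP : Pᵀ.mulVec y = 0) :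
    ‖ev (Phatᵀ.mulVec y)‖ ≤ specNorm ((1 - Phat * Phatᵀ) * P) := by
  set v : Fin r → ℝ := Phatᵀ.mulVec y with hv
  clear_value v
  by_cases hv0 : v = 0
  · rw [hv0, ev_zero, norm_zero]; exact specNorm_nonneg _
  set V : ℝ := ‖ev v‖ with hV
  clear_value V
  have hVpos : 0 < V := by rw [hV]; exact norm_pos_iff.mpr (ev_ne_zero hv0)
  have hVsq : V ^ 2 = v ⬝ᵥ v := by rw [hV]; exact norm_ev_sq v
  have hyy : y ⬝ᵥ y = 1 := by have := norm_ev_sq y; rw [hy] at this; linarith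
  set z : Fin n → ℝ := Phat.mulVec v with hz
  clear_value z
  have hzy : z ⬝ᵥ y = v ⬝ᵥ v := by rw [hz, dot_mulVec_left, ← hv]
  have hyz : y ⬝ᵥ z = v ⬝ᵥ v := by rw [dotProduct_comm]; exact hzy
  have hzz : z ⬝ᵥ z = v ⬝ᵥ v := by
    rw [hz, dot_mulVec_left, Matrix.mulVec_mulVec, hPhat, Matrix.one_mulVec]
  -- V ≤ 1
  have hzV : ‖ev z‖ = V := by
    have h1 : ‖ev z‖ ^ 2 = V ^ 2 := by rw [norm_ev_sq, hzz, hVsq]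
    nlinarith [norm_nonneg (ev z)]
  have hV1 : V ≤ 1 := by
    have hcs : z ⬝ᵥ y ≤ ‖ev z‖ * ‖ev y‖ := by
      rw [dot_eq_inner]; exact real_inner_le_norm _ _
    rw [hzV, hy, mul_one, hzy, ← hVsq] at hcs
    nlinarith
  -- Pythagoras
  set q : Fin r → ℝ := Pᵀ.mulVec z with hq
  clear_value q
  set a : Fin n → ℝ := P.mulVec q with ha
  clear_value a
  have haa : a ⬝ᵥ a = q ⬝ᵥ q := by
    rw [ha, dot_mulVec_left, Matrix.mulVec_mulVec, hP, Matrix.one_mulVec]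
  have haz : a ⬝ᵥ z = q ⬝ᵥ q := by rw [ha, dot_mulVec_left, ← hq]
  have hza : z ⬝ᵥ a = q ⬝ᵥ q := by rw [dotProduct_comm]; exact haz
  have hay : a ⬝ᵥ y = 0 := by
    rw [ha, dot_mulVec_left, hyP, dotProduct_zero]
  have hya : y ⬝ᵥ a = 0 := by rw [dotProduct_comm]; exact hay
  have hexp : 0 ≤ (z - a - (v ⬝ᵥ v) • y) ⬝ᵥ (z - a - (v ⬝ᵥ v) • y) := by
    rw [dot_eq_inner]; exact real_inner_self_nonneg
  simp only [sub_dotProduct, dotProduct_sub, smul_dotProduct,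
    dotProduct_smul, smul_eq_mul] at hexp
  rw [hzz, haz, hza, haa, hyz, hzy, hay, hya, hyy] at hexp
  have hV4 : V ^ 4 = (v ⬝ᵥ v) ^ 2 := by rw [← hVsq]; ring
  have hqbound : q ⬝ᵥ q ≤ V ^ 2 - V ^ 4 := by rw [hVsq, hV4]; nlinarith
  -- apply lemA
  set S : Matrix (Fin r) (Fin r) ℝ := Phatᵀ * P with hS
  clear_value S
  have hSt : Sᵀ = Pᵀ * Phat := by
    rw [hS, Matrix.transpose_mul, Matrix.transpose_transpose]
  set τ : ℝ := Real.sqrt (1 - V ^ 2) with hτ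
  clear_value τ
  have hw1 : ‖ev (V⁻¹ • v)‖ = 1 := by rw [hV]; exact norm_ev_normalize hv0
  have hSw : ‖ev (Sᵀ.mulVec (V⁻¹ • v))‖ ≤ τ := by
    have heq : Sᵀ.mulVec (V⁻¹ • v) = V⁻¹ • q := by
      rw [hSt, Matrix.mulVec_smul, ← Matrix.mulVec_mulVec, ← hz, ← hq]
    rw [heq, ev_smul, norm_smul, Real.norm_eq_abs, abs_of_pos (inv_pos.mpr hVpos)]
    rw [hτ]
    rw [Real.le_sqrt (by positivity) (by nlinarith)]
    have hqq : ‖ev q‖ ^ 2 = q ⬝ᵥ q := norm_ev_sq q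
    have : (V⁻¹ * ‖ev q‖) ^ 2 = V⁻¹ ^ 2 * (q ⬝ᵥ q) := by rw [mul_pow, hqq]
    rw [this]
    have hVinv : V⁻¹ ^ 2 * V ^ 2 = 1 := by
      field_simp
    nlinarith [sq_nonneg V⁻¹]
  obtain ⟨u, hu1, hSu⟩ := lemA S τ (V⁻¹ • v) hw1 hSw
  have hSu2 : ‖ev (S.mulVec u)‖ ^ 2 ≤ 1 - V ^ 2 := by
    have hτ2 : τ ^ 2 = 1 - V ^ 2 := by rw [hτ]; exact Real.sq_sqrt (by nlinarith)
    calc ‖ev (S.mulVec u)‖ ^ 2 ≤ τ ^ 2 := pow_le_pow_left₀ (norm_nonneg _) hSu 2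
      _ = 1 - V ^ 2 := hτ2
  -- final estimate
  set p : Fin n → ℝ := P.mulVec u with hp
  clear_value p
  set g : Fin r → ℝ := Phatᵀ.mulVec p with hg
  clear_value g
  have hgS : g = S.mulVec u := by rw [hg, hp, Matrix.mulVec_mulVec, hS]
  have hMu : ((1 - Phat * Phatᵀ) * P).mulVec u = p - Phat.mulVec g := by
    rw [hg, hp, Matrix.mulVec_mulVec, Matrix.mulVec_mulVec, Matrix.sub_mul, Matrix.one_mul,
      Matrix.sub_mulVec, Matrix.mul_assoc]
  have hpp : p ⬝ᵥ p = 1 := by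
    rw [hp, dot_mulVec_left, Matrix.mulVec_mulVec, hP, Matrix.one_mulVec]
    have := norm_ev_sq u; rw [hu1] at this; linarith
  have hgg : (Phat.mulVec g) ⬝ᵥ (Phat.mulVec g) = g ⬝ᵥ g := by
    rw [dot_mulVec_left, Matrix.mulVec_mulVec, hPhat, Matrix.one_mulVec]
  have hpg : p ⬝ᵥ (Phat.mulVec g) = g ⬝ᵥ g := by
    rw [dotProduct_comm, dot_mulVec_left, ← hg]
  have hgp : (Phat.mulVec g) ⬝ᵥ p = g ⬝ᵥ g := by
    rw [dotProduct_comm]; exact hpg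
  have hMnorm : ‖ev (((1 - Phat * Phatᵀ) * P).mulVec u)‖ ^ 2 = 1 - g ⬝ᵥ g := by
    rw [norm_ev_sq, hMu]
    simp only [sub_dotProduct, dotProduct_sub]
    rw [hpp, hgg, hpg, hgp]; ring
  have hgle : g ⬝ᵥ g ≤ 1 - V ^ 2 := by
    rw [hgS, ← norm_ev_sq]; exact hSu2
  have hfin := specNorm_mulVec_le ((1 - Phat * Phatᵀ) * P) u
  rw [hu1, mul_one] at hfin
  have h2 : V ^ 2 ≤ ‖ev (((1 - Phat * Phatᵀ) * P).mulVec u)‖ ^ 2 := by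
    rw [hMnorm]; linarith
  have h3 : V ≤ ‖ev (((1 - Phat * Phatᵀ) * P).mulVec u)‖ :=
    calc V = Real.sqrt (V ^ 2) := (Real.sqrt_sq hVpos.le).symm
      _ ≤ Real.sqrt (‖ev (((1 - Phat * Phatᵀ) * P).mulVec u)‖ ^ 2) := Real.sqrt_le_sqrt h2
      _ = _ := Real.sqrt_sq (norm_nonneg _)
  exact le_trans h3 hfin

set_option maxHeartbeats 3000000 in
/-- For basis matrices `P, P̂` (n×r) and `Q` (n×c) with `QᵀP = 0` and
`ζ* = ‖(I − P̂P̂ᵀ)P‖₂`: `‖P̂ᵀQ‖₂ ≤ ζ*`, and every singular value of `(I − P̂P̂ᵀ)Q`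
(i.e. `√μ` for every eigenvalue `μ` of its Gram matrix) lies in `[√(1 − ζ*²), 1]`. -/
theorem stmt5 {n r c : ℕ} (P Phat : Matrix (Fin n) (Fin r) ℝ)
    (Q : Matrix (Fin n) (Fin c) ℝ)
    (hP : Pᵀ * P = 1) (hPhat : Phatᵀ * Phat = 1) (hQ : Qᵀ * Q = 1)
    (horth : Qᵀ * P = 0)
    (ζs : ℝ) (hζ : ζs = specNorm ((1 - Phat * Phatᵀ) * P)) :
    specNorm (Phatᵀ * Q) ≤ ζs ∧
    ∀ (μ : ℝ) (x : Fin c → ℝ), x ≠ 0 →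
      (((1 - Phat * Phatᵀ) * Q)ᵀ * ((1 - Phat * Phatᵀ) * Q)).mulVec x = μ • x →
      Real.sqrt (1 - ζs ^ 2) ≤ Real.sqrt μ ∧ Real.sqrt μ ≤ 1 := by
  have hζ0 : 0 ≤ ζs := hζ ▸ specNorm_nonneg _
  have hPQ : Pᵀ * Q = 0 := by
    have h := congrArg Matrix.transpose horth
    rwa [Matrix.transpose_mul, Matrix.transpose_transpose, Matrix.transpose_zero] at h
  have part1 : specNorm (Phatᵀ * Q) ≤ ζs := by
    rw [hζ]
    refine specNorm_le_bound _ _ (specNorm_nonneg _) fun x => ?_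
    by_cases hx : x = 0
    · simp [hx, ev_zero, Matrix.mulVec_zero]
    · have hQx : ‖ev (Q.mulVec x)‖ = ‖ev x‖ := norm_mulVec_eq Q hQ x
      have hxpos : 0 < ‖ev x‖ := norm_pos_iff.mpr (ev_ne_zero hx)
      set y : Fin n → ℝ := ‖ev x‖⁻¹ • Q.mulVec x with hy
      clear_value y
      have hy1 : ‖ev y‖ = 1 := by
        rw [hy, ev_smul, norm_smul, Real.norm_eq_abs, abs_of_pos (inv_pos.mpr hxpos), hQx,
          inv_mul_cancel₀ hxpos.ne']
      have hyP : Pᵀ.mulVec y = 0 := by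
        rw [hy, Matrix.mulVec_smul, Matrix.mulVec_mulVec, hPQ, Matrix.zero_mulVec, smul_zero]
      have hk := key P Phat hP hPhat y hy1 hyP
      have heq : Phatᵀ.mulVec y = ‖ev x‖⁻¹ • (Phatᵀ * Q).mulVec x := by
        rw [hy, Matrix.mulVec_smul, Matrix.mulVec_mulVec]
      rw [heq, ev_smul, norm_smul, Real.norm_eq_abs, abs_of_pos (inv_pos.mpr hxpos)] at hk
      calc ‖ev ((Phatᵀ * Q).mulVec x)‖
          = ‖ev x‖ * (‖ev x‖⁻¹ * ‖ev ((Phatᵀ * Q).mulVec x)‖) := by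
            rw [← mul_assoc, mul_inv_cancel₀ hxpos.ne', one_mul]
        _ ≤ ‖ev x‖ * specNorm ((1 - Phat * Phatᵀ) * P) :=
            mul_le_mul_of_nonneg_left hk hxpos.le
        _ = specNorm ((1 - Phat * Phatᵀ) * P) * ‖ev x‖ := mul_comm _ _
  refine ⟨part1, ?_⟩
  intro μ x hx hmul
  have htB : (1 - Phat * Phatᵀ)ᵀ = 1 - Phat * Phatᵀ := by
    rw [Matrix.transpose_sub, Matrix.transpose_one, Matrix.transpose_mul,
      Matrix.transpose_transpose]
  have hMM : (1 - Phat * Phatᵀ)ᵀ * (1 - Phat * Phatᵀ) = 1 - Phat * Phatᵀ := by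
    rw [htB, Matrix.sub_mul, Matrix.one_mul, Matrix.mul_sub, Matrix.mul_one]
    have h2 : Phat * Phatᵀ * (Phat * Phatᵀ) = Phat * Phatᵀ := by
      rw [← Matrix.mul_assoc, Matrix.mul_assoc Phat Phatᵀ Phat, hPhat, Matrix.mul_one]
    rw [h2]
    abel
  have hGram : ((1 - Phat * Phatᵀ) * Q)ᵀ * ((1 - Phat * Phatᵀ) * Q)
      = 1 - (Phatᵀ * Q)ᵀ * (Phatᵀ * Q) := by
    calc ((1 - Phat * Phatᵀ) * Q)ᵀ * ((1 - Phat * Phatᵀ) * Q)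
        = Qᵀ * (((1 - Phat * Phatᵀ)ᵀ * (1 - Phat * Phatᵀ)) * Q) := by
          rw [Matrix.transpose_mul, Matrix.mul_assoc, Matrix.mul_assoc]
      _ = Qᵀ * ((1 - Phat * Phatᵀ) * Q) := by rw [hMM]
      _ = Qᵀ * Q - Qᵀ * (Phat * (Phatᵀ * Q)) := by
          rw [Matrix.sub_mul, Matrix.one_mul, Matrix.mul_sub, Matrix.mul_assoc]
      _ = 1 - (Phatᵀ * Q)ᵀ * (Phatᵀ * Q) := by
          rw [hQ, Matrix.transpose_mul, Matrix.transpose_transpose, Matrix.mul_assoc]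
  rw [hGram] at hmul
  have hdot : x ⬝ᵥ ((1 - (Phatᵀ * Q)ᵀ * (Phatᵀ * Q)).mulVec x) = μ * (x ⬝ᵥ x) := by
    rw [hmul, dotProduct_smul, smul_eq_mul]
  have hTx : x ⬝ᵥ (((Phatᵀ * Q)ᵀ * (Phatᵀ * Q)).mulVec x)
      = ((Phatᵀ * Q).mulVec x) ⬝ᵥ ((Phatᵀ * Q).mulVec x) := by
    rw [dot_mulVec_left, Matrix.mulVec_mulVec]
  rw [Matrix.sub_mulVec, Matrix.one_mulVec, dotProduct_sub, hTx] at hdot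
  have hxx : x ⬝ᵥ x = ‖ev x‖ ^ 2 := (norm_ev_sq x).symm
  have hTT : ((Phatᵀ * Q).mulVec x) ⬝ᵥ ((Phatᵀ * Q).mulVec x)
      = ‖ev ((Phatᵀ * Q).mulVec x)‖ ^ 2 := (norm_ev_sq _).symm
  rw [hxx, hTT] at hdot
  have hxpos : 0 < ‖ev x‖ := norm_pos_iff.mpr (ev_ne_zero hx)
  have hbound : ‖ev ((Phatᵀ * Q).mulVec x)‖ ≤ ζs * ‖ev x‖ :=
    le_trans (specNorm_mulVec_le _ x)
      (mul_le_mul_of_nonneg_right part1 (norm_nonneg _))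
  have hb2 : ‖ev ((Phatᵀ * Q).mulVec x)‖ ^ 2 ≤ ζs ^ 2 * ‖ev x‖ ^ 2 := by
    have := pow_le_pow_left₀ (norm_nonneg _) hbound 2
    calc ‖ev ((Phatᵀ * Q).mulVec x)‖ ^ 2 ≤ (ζs * ‖ev x‖) ^ 2 := this
      _ = ζs ^ 2 * ‖ev x‖ ^ 2 := by ring
  have hN2 : 0 < ‖ev x‖ ^ 2 := pow_pos hxpos 2
  have hμlow : 1 - ζs ^ 2 ≤ μ := by nlinarith [hN2]
  have hμhigh : μ ≤ 1 := by nlinarith [hN2, sq_nonneg ‖ev ((Phatᵀ * Q).mulVec x)‖]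
  exact ⟨Real.sqrt_le_sqrt hμlow, Real.sqrt_le_one.mpr hμhigh⟩
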